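/- There exists a constant l > 0, depending only on β, θ and μ (namely any l with (G∘F₁⁻¹)' < -l on (0, F₁(1))), such that for all y₀¹, y₀² ∈ (0, F₁(1)) and all t ∈ ℝ₊, |y_t(y₀¹) - y_t(y₀²)| ≤ |y₀¹ - y₀²| · e^{-lt}. -/

import Mathlib

/- Fix α ∈ (0,1], β ∈ (1-α,1), θ > 0, μ ∈ (0,1), γ ∈ ℝ.
F₁(y) = ∫₀^y [v(1-v)]^{-β} dv is a strictly increasing bijection from [0,1]
onto [0,F₁(1)] with inverse F₁⁻¹ (realized via `Function.invFunOn`), and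
G(y) := θ(μ-y)[y(1-y)]^{-β}.
STATEMENT 14: There exists l > 0, depending only on β, θ, μ (in particular not
on the driving signal w nor on the initial conditions), such that for every
α-Hölder w with w₀ = 0, all y₀¹, y₀² ∈ (0,F₁(1)) and the corresponding
continuous (0,F₁(1))-valued solutions of
y_t = y₀ⁱ + ∫₀^t (G∘F₁⁻¹)(y_s) ds + γθ^β w_t, one has
|y_t(y₀¹) - y_t(y₀²)| ≤ |y₀¹ - y₀²| e^{-lt} for all t ∈ ℝ₊. -/

noncomputable def F1 (β y : ℝ) : ℝ := ∫ v in (0:ℝ)..y, (v * (1 - v)) ^ (-β)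

noncomputable def F1inv (β z : ℝ) : ℝ := Function.invFunOn (F1 β) (Set.Icc 0 1) z

noncomputable def G (β θ μ x : ℝ) : ℝ := θ * (μ - x) * (x * (1 - x)) ^ (-β)

open Set MeasureTheory intervalIntegral Function



lemma integrand_meas (β : ℝ) : Measurable (fun v : ℝ => (v * (1 - v)) ^ (-β)) :=
  (measurable_id.mul (measurable_const.sub measurable_id)).pow measurable_const

lemma integrand_intble (β : ℝ) (hβ0 : 0 < β) (hβ1 : β < 1) :
    IntervalIntegrable (fun v : ℝ => (v * (1 - v)) ^ (-β)) volume 0 1 := by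
  have key : ∀ v ∈ Set.uIoc (0:ℝ) (1/2), ‖(v * (1 - v)) ^ (-β)‖ ≤ ‖(2:ℝ) ^ β * v ^ (-β)‖ := by
    intro v hv
    rw [Set.uIoc_of_le (by norm_num : (0:ℝ) ≤ 1/2)] at hv
    obtain ⟨hv0, hv2⟩ := hv
    have hv1 : (0:ℝ) < 1 - v := by linarith
    rw [Real.norm_eq_abs, Real.norm_eq_abs, abs_of_nonneg (Real.rpow_nonneg (by positivity) _),
      abs_of_nonneg (by positivity), Real.mul_rpow hv0.le hv1.le, mul_comm]
    have h2 : (1 - v) ^ (-β) ≤ ((1:ℝ)/2) ^ (-β) :=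
      Real.rpow_le_rpow_of_nonpos (by norm_num) (by linarith) (by linarith)
    have h3 : ((1:ℝ)/2) ^ (-β) = (2:ℝ) ^ β := by
      rw [one_div, ← Real.rpow_neg_one, ← Real.rpow_mul (by norm_num : (0:ℝ) ≤ 2)]
      norm_num
    have h4 : 0 ≤ v ^ (-β) := Real.rpow_nonneg hv0.le _
    calc (1 - v) ^ (-β) * v ^ (-β) ≤ (2:ℝ) ^ β * v ^ (-β) := by
          apply mul_le_mul_of_nonneg_right _ h4; rw [← h3]; exact h2
      _ = _ := rfl
  have h1 : IntervalIntegrable (fun v : ℝ => (v * (1 - v)) ^ (-β)) volume 0 (1/2) := by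
    refine IntervalIntegrable.mono_fun
      ((intervalIntegrable_rpow' (by linarith : (-1:ℝ) < -β)).const_mul ((2:ℝ)^β))
      ((integrand_meas β).aestronglyMeasurable) ?_
    rw [Filter.EventuallyLE, ae_restrict_iff' measurableSet_uIoc]
    exact .of_forall key
  have h2 : IntervalIntegrable (fun v : ℝ => (v * (1 - v)) ^ (-β)) volume (1/2) 1 := by
    have := (h1.comp_sub_left 1).symm
    norm_num at this
    refine this.congr ?_
    intro v _
    ring_nf
  exact h1.trans h2


section F1props
variable {β : ℝ} (hβ0 : 0 < β) (hβ1 : β < 1)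

lemma intble_sub (hβ0 : 0 < β) (hβ1 : β < 1) {a b : ℝ} (ha : a ∈ Icc (0:ℝ) 1)
    (hb : b ∈ Icc (0:ℝ) 1) :
    IntervalIntegrable (fun v : ℝ => (v * (1 - v)) ^ (-β)) volume a b := by
  refine (integrand_intble β hβ0 hβ1).mono_set ?_
  rw [Set.uIcc_of_le (by norm_num : (0:ℝ) ≤ 1)]
  exact Set.uIcc_subset_Icc ha hb

lemma F1_zero : F1 β 0 = 0 := intervalIntegral.integral_same

lemma F1_continuousOn (hβ0 : 0 < β) (hβ1 : β < 1) : ContinuousOn (F1 β) (Icc 0 1) := by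
  have h01 : (0:ℝ) ∈ Set.uIcc (0:ℝ) 1 := by
    rw [Set.uIcc_of_le (by norm_num : (0:ℝ) ≤ 1)]
    exact Set.left_mem_Icc.2 zero_le_one
  have := intervalIntegral.continuousOn_primitive_interval'
    (intble_sub hβ0 hβ1 (Set.left_mem_Icc.2 zero_le_one) (Set.right_mem_Icc.2 zero_le_one)) h01
  rwa [Set.uIcc_of_le (by norm_num : (0:ℝ) ≤ 1)] at this

lemma F1_strictMonoOn (hβ0 : 0 < β) (hβ1 : β < 1) : StrictMonoOn (F1 β) (Icc 0 1) := by
  intro a ha b hb hab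
  have hsub : F1 β b - F1 β a = ∫ v in a..b, (v * (1 - v)) ^ (-β) := by
    rw [F1, F1, ← intervalIntegral.integral_interval_sub_left
      (intble_sub hβ0 hβ1 (Set.left_mem_Icc.2 zero_le_one) hb) (intble_sub hβ0 hβ1 (Set.left_mem_Icc.2 zero_le_one) ha)]
  have hpos : 0 < ∫ v in a..b, (v * (1 - v)) ^ (-β) := by
    refine intervalIntegral.intervalIntegral_pos_of_pos_on (intble_sub hβ0 hβ1 ha hb) ?_ hab
    intro x hx
    have hx0 : 0 < x := lt_of_le_of_lt ha.1 hx.1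
    have hx1 : x < 1 := lt_of_lt_of_le hx.2 hb.2
    exact Real.rpow_pos_of_pos (by nlinarith) _
  linarith [hsub ▸ hpos]

lemma F1_one_pos (hβ0 : 0 < β) (hβ1 : β < 1) : 0 < F1 β 1 := by
  have := F1_strictMonoOn hβ0 hβ1 (Set.left_mem_Icc.2 (by norm_num))
    (Set.right_mem_Icc.2 (by norm_num)) one_pos
  rwa [F1_zero] at this

lemma F1_image (hβ0 : 0 < β) (hβ1 : β < 1) : F1 β '' Icc 0 1 = Icc 0 (F1 β 1) := by
  apply Set.Subset.antisymm
  · rintro _ ⟨x, hx, rfl⟩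
    constructor
    · rw [← F1_zero (β := β)]
      exact (F1_strictMonoOn hβ0 hβ1).monotoneOn (Set.left_mem_Icc.2 (by norm_num)) hx hx.1
    · exact (F1_strictMonoOn hβ0 hβ1).monotoneOn hx (Set.right_mem_Icc.2 (by norm_num)) hx.2
  · have := intermediate_value_Icc (by norm_num : (0:ℝ) ≤ 1) (F1_continuousOn hβ0 hβ1)
    rwa [F1_zero] at this

lemma F1inv_mem (hβ0 : 0 < β) (hβ1 : β < 1) {z : ℝ} (hz : z ∈ Icc 0 (F1 β 1)) :
    F1inv β z ∈ Icc (0:ℝ) 1 := by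
  rw [← F1_image hβ0 hβ1] at hz
  exact Function.invFunOn_mem hz

lemma F1_F1inv (hβ0 : 0 < β) (hβ1 : β < 1) {z : ℝ} (hz : z ∈ Icc 0 (F1 β 1)) :
    F1 β (F1inv β z) = z := by
  rw [← F1_image hβ0 hβ1] at hz
  exact Function.invFunOn_eq hz

lemma F1inv_F1 (hβ0 : 0 < β) (hβ1 : β < 1) {x : ℝ} (hx : x ∈ Icc (0:ℝ) 1) :
    F1inv β (F1 β x) = x :=
  ((F1_strictMonoOn hβ0 hβ1).injOn).leftInvOn_invFunOn hx

lemma F1inv_mem_Ioo (hβ0 : 0 < β) (hβ1 : β < 1) {z : ℝ} (hz : z ∈ Ioo 0 (F1 β 1)) :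
    F1inv β z ∈ Ioo (0:ℝ) 1 := by
  have hz' : z ∈ Icc 0 (F1 β 1) := ⟨hz.1.le, hz.2.le⟩
  have hmem := F1inv_mem hβ0 hβ1 hz'
  have heq := F1_F1inv hβ0 hβ1 hz'
  constructor
  · rcases lt_or_eq_of_le hmem.1 with h | h
    · exact h
    · exfalso; rw [← h, F1_zero] at heq; exact hz.1.ne heq
  · rcases lt_or_eq_of_le hmem.2 with h | h
    · exact h
    · exfalso; rw [h] at heq; exact hz.2.ne heq.symm

lemma F1inv_monotoneOn (hβ0 : 0 < β) (hβ1 : β < 1) :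
    MonotoneOn (F1inv β) (Icc 0 (F1 β 1)) := by
  intro a ha b hb hab
  by_contra h
  push_neg at h
  have := F1_strictMonoOn hβ0 hβ1 (F1inv_mem hβ0 hβ1 hb) (F1inv_mem hβ0 hβ1 ha) h
  rw [F1_F1inv hβ0 hβ1 ha, F1_F1inv hβ0 hβ1 hb] at this
  exact absurd hab (not_le.2 this)

lemma F1inv_continuousAt (hβ0 : 0 < β) (hβ1 : β < 1) {z : ℝ} (hz : z ∈ Ioo 0 (F1 β 1)) :
    ContinuousAt (F1inv β) z := by
  refine continuousAt_of_monotoneOn_of_image_mem_nhds (F1inv_monotoneOn hβ0 hβ1) ?_ ?_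
  · exact Filter.mem_of_superset (Ioo_mem_nhds hz.1 hz.2) Set.Ioo_subset_Icc_self
  · have himg : F1inv β '' Icc 0 (F1 β 1) = Icc (0:ℝ) 1 := by
      apply Set.Subset.antisymm
      · rintro _ ⟨w, hw, rfl⟩; exact F1inv_mem hβ0 hβ1 hw
      · intro x hx
        exact ⟨F1 β x, by rw [← F1_image hβ0 hβ1]; exact Set.mem_image_of_mem _ hx,
          F1inv_F1 hβ0 hβ1 hx⟩
    rw [himg]
    have := F1inv_mem_Ioo hβ0 hβ1 hz
    exact Filter.mem_of_superset (Ioo_mem_nhds this.1 this.2) Set.Ioo_subset_Icc_self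

lemma F1_hasDerivAt (hβ0 : 0 < β) (hβ1 : β < 1) {x : ℝ} (hx : x ∈ Ioo (0:ℝ) 1) :
    HasDerivAt (F1 β) ((x * (1 - x)) ^ (-β)) x := by
  refine intervalIntegral.integral_hasDerivAt_right
    (intble_sub hβ0 hβ1 (Set.left_mem_Icc.2 zero_le_one) ⟨hx.1.le, hx.2.le⟩) ?_ ?_
  · exact ((integrand_meas β).stronglyMeasurable.stronglyMeasurableAtFilter)
  · have hne : x * (1 - x) ≠ 0 := by
      have h1 := hx.1; have h2 := hx.2; nlinarith
    exact ((continuousAt_id.mul (continuousAt_const.sub continuousAt_id)).rpow_const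
      (Or.inl hne))

end F1props


section Gprops
variable {β θ μ : ℝ}

lemma G_hasDerivAt (x : ℝ) (hx : x ∈ Ioo (0:ℝ) 1) :
    HasDerivAt (G β θ μ)
      ((-θ) * (x * (1 - x)) ^ (-β)
        + θ * (μ - x) * ((1 - 2*x) * (-β) * (x * (1 - x)) ^ (-β - 1))) x := by
  have hne : x * (1 - x) ≠ 0 := by
    have h1 := hx.1; have h2 := hx.2; nlinarith
  have hp : HasDerivAt (fun x : ℝ => x * (1 - x)) (1 - 2*x) x := by
    have := (hasDerivAt_id x).mul ((hasDerivAt_const x (1:ℝ)).sub (hasDerivAt_id x))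
    exact this.congr_deriv (by simp; ring)
  have hpow : HasDerivAt (fun x : ℝ => (x * (1 - x)) ^ (-β))
      ((1 - 2*x) * (-β) * (x * (1 - x)) ^ (-β - 1)) x :=
    hp.rpow_const (Or.inl hne)
  have hmul : HasDerivAt (fun x : ℝ => θ * (μ - x)) (-θ) x := by
    have := (hasDerivAt_const x θ).mul ((hasDerivAt_const x μ).sub (hasDerivAt_id x))
    exact this.congr_deriv (by simp)
  exact hmul.mul hpow

lemma G_deriv_bound (hβ0 : 0 < β) (hβ1 : β < 1) (hθ : 0 < θ) (hμ : μ ∈ Ioo (0:ℝ) 1)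
    (x : ℝ) (hx : x ∈ Ioo (0:ℝ) 1) :
    (-θ) * (x * (1 - x)) ^ (-β)
      + θ * (μ - x) * ((1 - 2*x) * (-β) * (x * (1 - x)) ^ (-β - 1))
      + (4*θ*β*μ*(1-μ)) * (x * (1 - x)) ^ (-β) ≤ 0 := by
  have hx0 := hx.1
  have hx1 := hx.2
  have hμ0 := hμ.1
  have hμ1 := hμ.2
  have hppos : (0:ℝ) < x * (1 - x) := by nlinarith
  have hsplit : (x * (1 - x)) ^ (-β) = (x * (1 - x)) * (x * (1 - x)) ^ (-β - 1) := by
    have h1 := Real.rpow_add hppos 1 (-β - 1)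
    rw [Real.rpow_one, show (1:ℝ) + (-β - 1) = -β by ring] at h1
    exact h1
  rw [hsplit]
  have hq : (-θ) * ((x * (1 - x)) * (x * (1 - x)) ^ (-β - 1))
      + θ * (μ - x) * ((1 - 2*x) * (-β) * (x * (1 - x)) ^ (-β - 1))
      + (4*θ*β*μ*(1-μ)) * ((x * (1 - x)) * (x * (1 - x)) ^ (-β - 1))
      = ((4*θ*β*μ*(1-μ) - θ) * (x * (1 - x)) - θ*β*(μ - x)*(1 - 2*x))
        * (x * (1 - x)) ^ (-β - 1) := by ring
  rw [hq]
  apply mul_nonpos_of_nonpos_of_nonneg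
  · have h1 : 0 ≤ θ*β*μ*(1-μ)*(1-2*x)^2 :=
      mul_nonneg (mul_nonneg (mul_nonneg (mul_nonneg hθ.le hβ0.le) hμ0.le) (by linarith)) (sq_nonneg _)
    have h2 : 0 ≤ θ*(1-β)*(x*(1-x)) := by
      apply mul_nonneg (by nlinarith) hppos.le
    have h3 : 0 ≤ θ*β*(x-μ)^2 := mul_nonneg (mul_nonneg hθ.le hβ0.le) (sq_nonneg _)
    nlinarith [h1, h2, h3]
  · exact Real.rpow_nonneg hppos.le _

end Gprops

section Key
variable {β θ μ : ℝ}

lemma H_antitone (hβ0 : 0 < β) (hβ1 : β < 1) (hθ : 0 < θ) (hμ : μ ∈ Ioo (0:ℝ) 1) :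
    AntitoneOn (fun x => G β θ μ x + (4*θ*β*μ*(1-μ)) * F1 β x) (Ioo (0:ℝ) 1) := by
  have hderiv : ∀ x ∈ Ioo (0:ℝ) 1,
      HasDerivAt (fun x => G β θ μ x + (4*θ*β*μ*(1-μ)) * F1 β x)
        (((-θ) * (x * (1 - x)) ^ (-β)
          + θ * (μ - x) * ((1 - 2*x) * (-β) * (x * (1 - x)) ^ (-β - 1)))
          + (4*θ*β*μ*(1-μ)) * (x * (1 - x)) ^ (-β)) x := fun x hx =>
    (G_hasDerivAt x hx).add
      ((F1_hasDerivAt hβ0 hβ1 hx).const_mul (4*θ*β*μ*(1-μ)))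
  refine antitoneOn_of_deriv_nonpos (convex_Ioo 0 1) ?_ ?_ ?_
  · exact fun x hx => ((hderiv x hx).continuousAt).continuousWithinAt
  · rw [interior_Ioo]
    exact fun x hx => ((hderiv x hx).differentiableAt).differentiableWithinAt
  · rw [interior_Ioo]
    intro x hx
    rw [(hderiv x hx).deriv]
    have := G_deriv_bound hβ0 hβ1 hθ hμ x hx
    linarith

lemma g_contract (hβ0 : 0 < β) (hβ1 : β < 1) (hθ : 0 < θ) (hμ : μ ∈ Ioo (0:ℝ) 1)
    {a b : ℝ} (ha : a ∈ Ioo 0 (F1 β 1)) (hb : b ∈ Ioo 0 (F1 β 1)) (hba : b ≤ a) :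
    G β θ μ (F1inv β a) - G β θ μ (F1inv β b) ≤ -(4*θ*β*μ*(1-μ)) * (a - b) := by
  have hxa := F1inv_mem_Ioo hβ0 hβ1 ha
  have hxb := F1inv_mem_Ioo hβ0 hβ1 hb
  have hmono : F1inv β b ≤ F1inv β a :=
    F1inv_monotoneOn hβ0 hβ1 ⟨hb.1.le, hb.2.le⟩ ⟨ha.1.le, ha.2.le⟩ hba
  have := H_antitone hβ0 hβ1 hθ hμ hxb hxa hmono
  simp only at this
  rw [F1_F1inv hβ0 hβ1 ⟨ha.1.le, ha.2.le⟩, F1_F1inv hβ0 hβ1 ⟨hb.1.le, hb.2.le⟩] at this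
  linarith

end Key

section Main
variable {β θ μ : ℝ}

lemma gcomp_continuousOn (hβ0 : 0 < β) (hβ1 : β < 1) {y : ℝ → ℝ}
    (hc : ContinuousOn y (Ici 0)) (hm : ∀ t ∈ Ici (0:ℝ), y t ∈ Ioo 0 (F1 β 1)) :
    ContinuousOn (fun s => G β θ μ (F1inv β (y s))) (Ici 0) := by
  intro s hs
  have h1 : ContinuousWithinAt y (Ici 0) s := hc s hs
  have h2 : ContinuousAt (F1inv β) (y s) := F1inv_continuousAt hβ0 hβ1 (hm s hs)
  have hx : F1inv β (y s) ∈ Ioo (0:ℝ) 1 := F1inv_mem_Ioo hβ0 hβ1 (hm s hs)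
  have h3 : ContinuousAt (G β θ μ) (F1inv β (y s)) := by
    have hne : F1inv β (y s) * (1 - F1inv β (y s)) ≠ 0 := by
      have := hx.1; have := hx.2; nlinarith
    exact (continuousAt_const.mul (continuousAt_const.sub continuousAt_id)).mul
      ((continuousAt_id.mul (continuousAt_const.sub continuousAt_id)).rpow_const (Or.inl hne))
  exact ((h3.comp h2).comp_continuousWithinAt h1)

lemma sol_hasDerivAt (hβ0 : 0 < β) (hβ1 : β < 1) {y : ℝ → ℝ}
    (hc : ContinuousOn y (Ici 0)) (hm : ∀ t ∈ Ici (0:ℝ), y t ∈ Ioo 0 (F1 β 1))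
    {τ : ℝ} (hτ : 0 < τ) :
    HasDerivAt (fun u => ∫ s in (0:ℝ)..u, G β θ μ (F1inv β (y s)))
      (G β θ μ (F1inv β (y τ))) τ := by
  have hgc := gcomp_continuousOn (θ := θ) (μ := μ) hβ0 hβ1 hc hm
  refine intervalIntegral.integral_hasDerivAt_right ?_ ?_ ?_
  · refine (hgc.mono ?_).intervalIntegrable
    rw [Set.uIcc_of_le hτ.le]
    exact fun s hs => hs.1
  · exact ⟨Ioi 0, Ioi_mem_nhds hτ,
      ((hgc.mono Ioi_subset_Ici_self).aestronglyMeasurable measurableSet_Ioi)⟩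
  · exact hgc.continuousAt (Ici_mem_nhds hτ)

end Main

theorem stmt14 (α β θ μ γ : ℝ) (hα : α ∈ Set.Ioc (0:ℝ) 1)
    (hβ : β ∈ Set.Ioo (1 - α) 1) (hθ : 0 < θ) (hμ : μ ∈ Set.Ioo (0:ℝ) 1) :
    ∃ l : ℝ, 0 < l ∧
      ∀ w : ℝ → ℝ, w 0 = 0 →
        (∀ T > (0:ℝ), ∃ C : ℝ, ∀ s ∈ Set.Icc (0:ℝ) T, ∀ t ∈ Set.Icc (0:ℝ) T,
          |w t - w s| ≤ C * |t - s| ^ α) →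
        ∀ y₀1 ∈ Set.Ioo 0 (F1 β 1), ∀ y₀2 ∈ Set.Ioo 0 (F1 β 1),
        ∀ y1 y2 : ℝ → ℝ,
          (ContinuousOn y1 (Set.Ici 0) ∧
           (∀ t ∈ Set.Ici (0:ℝ), y1 t ∈ Set.Ioo 0 (F1 β 1)) ∧
           (∀ t ∈ Set.Ici (0:ℝ),
             y1 t = y₀1 + (∫ s in (0:ℝ)..t, G β θ μ (F1inv β (y1 s))) + γ * θ ^ β * w t)) →
          (ContinuousOn y2 (Set.Ici 0) ∧
           (∀ t ∈ Set.Ici (0:ℝ), y2 t ∈ Set.Ioo 0 (F1 β 1)) ∧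
           (∀ t ∈ Set.Ici (0:ℝ),
             y2 t = y₀2 + (∫ s in (0:ℝ)..t, G β θ μ (F1inv β (y2 s))) + γ * θ ^ β * w t)) →
          ∀ t ∈ Set.Ici (0:ℝ), |y1 t - y2 t| ≤ |y₀1 - y₀2| * Real.exp (-l * t) := by
  have hβ0 : 0 < β := by have := hα.2; have := hβ.1; linarith
  have hβ1 : β < 1 := hβ.2
  have hμ0 := hμ.1
  have hμ1 := hμ.2
  have hL : 0 < 4*θ*β*μ*(1-μ) := by
    apply mul_pos (mul_pos (mul_pos (by linarith) hβ0) hμ0); linarith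
  refine ⟨4*θ*β*μ*(1-μ), hL, ?_⟩
  intro w hw0 _hw y₀1 hy₀1 y₀2 hy₀2 y1 y2 hsol1 hsol2 t ht
  obtain ⟨hc1, hm1, he1⟩ := hsol1
  obtain ⟨hc2, hm2, he2⟩ := hsol2
  have h0mem : (0:ℝ) ∈ Ici (0:ℝ) := Set.self_mem_Ici
  have hy10 : y1 0 = y₀1 := by
    have := he1 0 h0mem; simpa [hw0] using this
  have hy20 : y2 0 = y₀2 := by
    have := he2 0 h0mem; simpa [hw0] using this
  -- the difference function via integrals (noise cancels)
  set φ : ℝ → ℝ := fun u => y₀1 - y₀2 + ((∫ s in (0:ℝ)..u, G β θ μ (F1inv β (y1 s)))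
    - (∫ s in (0:ℝ)..u, G β θ μ (F1inv β (y2 s)))) with hφ
  have hφeq : ∀ s ∈ Ici (0:ℝ), φ s = y1 s - y2 s := by
    intro s hs
    rw [hφ]
    simp only
    rw [he1 s hs, he2 s hs]
    ring
  have hφd : ∀ τ : ℝ, 0 < τ → HasDerivAt φ
      (G β θ μ (F1inv β (y1 τ)) - G β θ μ (F1inv β (y2 τ))) τ := by
    intro τ hτ
    exact ((sol_hasDerivAt hβ0 hβ1 hc1 hm1 hτ).sub
      (sol_hasDerivAt hβ0 hβ1 hc2 hm2 hτ)).const_add (y₀1 - y₀2)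
  -- the Lyapunov function
  set h : ℝ → ℝ := fun u => (y1 u - y2 u)^2 * Real.exp (2*(4*θ*β*μ*(1-μ))*u) with hh
  have hhd : ∀ τ : ℝ, 0 < τ → HasDerivAt h
      ((2 * φ τ ^ 1 * (G β θ μ (F1inv β (y1 τ)) - G β θ μ (F1inv β (y2 τ))))
        * Real.exp (2*(4*θ*β*μ*(1-μ))*τ)
       + (φ τ)^2 * (Real.exp (2*(4*θ*β*μ*(1-μ))*τ) * (2*(4*θ*β*μ*(1-μ))))) τ := by
    intro τ hτ
    have hE : HasDerivAt (fun u : ℝ => Real.exp (2*(4*θ*β*μ*(1-μ))*u))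
        (Real.exp (2*(4*θ*β*μ*(1-μ))*τ) * (2*(4*θ*β*μ*(1-μ)))) τ := by
      have := ((hasDerivAt_id τ).const_mul (2*(4*θ*β*μ*(1-μ)))).exp
      simpa using this
    have hsq : HasDerivAt (fun u => (φ u)^2)
        (2 * φ τ ^ 1 * (G β θ μ (F1inv β (y1 τ)) - G β θ μ (F1inv β (y2 τ)))) τ := by
      have := (hφd τ hτ).pow 2
      norm_num at this ⊢
      exact this
    have := hsq.mul hE
    refine this.congr_of_eventuallyEq ?_
    filter_upwards [Ici_mem_nhds hτ] with s hs
    rw [hh]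
    simp only [Pi.mul_apply]
    rw [hφeq s hs]
  have hanti : AntitoneOn h (Ici 0) := by
    refine antitoneOn_of_deriv_nonpos (convex_Ici 0) ?_ ?_ ?_
    · exact ((hc1.sub hc2).pow 2).mul
        (Real.continuous_exp.comp (continuous_const.mul continuous_id)).continuousOn
    · rw [interior_Ici]
      exact fun τ hτ => (hhd τ hτ).differentiableAt.differentiableWithinAt
    · rw [interior_Ici]
      intro τ hτ
      rw [(hhd τ hτ).deriv]
      have hτ' : τ ∈ Ici (0:ℝ) := (le_of_lt hτ : (0:ℝ) ≤ τ)
      have hzτ : φ τ = y1 τ - y2 τ := hφeq τ hτ'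
      have hkey : φ τ * (G β θ μ (F1inv β (y1 τ)) - G β θ μ (F1inv β (y2 τ)))
          + (4*θ*β*μ*(1-μ)) * (φ τ)^2 ≤ 0 := by
        rw [hzτ]
        rcases le_total (y2 τ) (y1 τ) with hle | hle
        · have := g_contract hβ0 hβ1 hθ hμ (hm1 τ hτ') (hm2 τ hτ') hle
          nlinarith [mul_le_mul_of_nonneg_left this (show (0:ℝ) ≤ y1 τ - y2 τ by linarith)]
        · have := g_contract hβ0 hβ1 hθ hμ (hm2 τ hτ') (hm1 τ hτ') hle
          nlinarith [mul_le_mul_of_nonneg_left this (show (0:ℝ) ≤ y2 τ - y1 τ by linarith)]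
      have hE : 0 < Real.exp (2*(4*θ*β*μ*(1-μ))*τ) := Real.exp_pos _
      have hkey' := hkey
      rw [hzτ] at hkey'
      nlinarith [mul_le_mul_of_nonneg_right hkey' hE.le]
  -- conclude
  have hle : h t ≤ h 0 := hanti h0mem ht ht
  have hh0 : h 0 = (y₀1 - y₀2)^2 := by
    rw [hh]; simp [hy10, hy20]
  have hsq : (y1 t - y2 t)^2 ≤ (|y₀1 - y₀2| * Real.exp (-(4*θ*β*μ*(1-μ)) * t))^2 := by
    have hexp : (|y₀1 - y₀2| * Real.exp (-(4*θ*β*μ*(1-μ)) * t))^2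
        = (y₀1 - y₀2)^2 * Real.exp (-(2*(4*θ*β*μ*(1-μ))*t)) := by
      rw [mul_pow, sq_abs, pow_two (Real.exp _), ← Real.exp_add]
      ring_nf
    rw [hexp]
    have hE : 0 < Real.exp (2*(4*θ*β*μ*(1-μ))*t) := Real.exp_pos _
    have hle' : (y1 t - y2 t)^2 * Real.exp (2*(4*θ*β*μ*(1-μ))*t) ≤ (y₀1 - y₀2)^2 := by
      have h2 := hle
      rw [hh0] at h2
      exact h2
    rw [Real.exp_neg, ← div_eq_mul_inv, le_div_iff₀ hE]
    exact hle'
  calc |y1 t - y2 t| = Real.sqrt ((y1 t - y2 t)^2) := (Real.sqrt_sq_eq_abs _).symm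
    _ ≤ Real.sqrt ((|y₀1 - y₀2| * Real.exp (-(4*θ*β*μ*(1-μ)) * t))^2) :=
        Real.sqrt_le_sqrt hsq
    _ = |y₀1 - y₀2| * Real.exp (-(4*θ*β*μ*(1-μ)) * t) :=
        Real.sqrt_sq (by positivity)
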